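/- Let D be a decoherence map on a nonempty compact convex set Ω in a finite-dimensional real vector space V, and let s_i, s_j be extreme points of D(Ω). Suppose there are linear functionals E_i, E_j : V → ℝ, each nonnegative on Ω, with {s ∈ Ω | E_i(s) = 0} = Ref(s_i) and {s ∈ Ω | E_j(s) = 0} = Ref(s_j). If the linear span of Ref(s_i) equals the linear span of Ref(s_j), then s_i = s_j. -/

import Mathlib

/-- `s` refines `x` (written `s ≻ x`) relative to the convex set `Ω`:
there exist `p ∈ (0,1]` and `t ∈ Ω` with `x = p • s + (1-p) • t`. -/
def Refines {V : Type*} [AddCommGroup V] [Module ℝ V] (Ω : Set V) (s x : V) : Prop :=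
  ∃ p : ℝ, 0 < p ∧ p ≤ 1 ∧ ∃ t ∈ Ω, x = p • s + (1 - p) • t

/-- The refinement set of `x` in `Ω`: all states of `Ω` refining `x`. -/
def RefSet {V : Type*} [AddCommGroup V] [Module ℝ V] (Ω : Set V) (x : V) : Set V :=
  {s ∈ Ω | Refines Ω s x}

/-- `F` is a face of `Ω`: a convex subset of `Ω` closed under refinement. -/
def IsFaceOf {V : Type*} [AddCommGroup V] [Module ℝ V] (F Ω : Set V) : Prop :=
  F ⊆ Ω ∧ Convex ℝ F ∧ ∀ s' ∈ F, ∀ s ∈ Ω, Refines Ω s s' → s ∈ F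

/-- A decoherence map on `Ω`: a linear map sending `Ω` into itself, idempotent
on `Ω`, and purity-decreasing (if `D ρ ≻ ρ` then `ρ ≻ D ρ`). -/
def IsDecoherence {V : Type*} [AddCommGroup V] [Module ℝ V]
    (Ω : Set V) (D : V →ₗ[ℝ] V) : Prop :=
  D '' Ω ⊆ Ω ∧ (∀ s ∈ Ω, D (D s) = D s) ∧
    ∀ ρ ∈ Ω, Refines Ω (D ρ) ρ → Refines Ω ρ (D ρ)

/-- if the refinement sets of two extreme points of `D '' Ω` are
exposed (zero sets of linear functionals nonnegative on `Ω`) and have equal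
linear spans, then the extreme points coincide. -/
theorem eq_of_span_refSet_eq {V : Type*} [NormedAddCommGroup V]
    [NormedSpace ℝ V] [FiniteDimensional ℝ V]
    (Ω : Set V) (hne : Ω.Nonempty) (hcomp : IsCompact Ω) (hconv : Convex ℝ Ω)
    (D : V →ₗ[ℝ] V) (hD : IsDecoherence Ω D)
    (si sj : V) (hsi : si ∈ (D '' Ω).extremePoints ℝ) (hsj : sj ∈ (D '' Ω).extremePoints ℝ)
    (Ei Ej : V →ₗ[ℝ] ℝ)
    (hEipos : ∀ x ∈ Ω, 0 ≤ Ei x) (hEjpos : ∀ x ∈ Ω, 0 ≤ Ej x)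
    (hEi : {x ∈ Ω | Ei x = 0} = RefSet Ω si)
    (hEj : {x ∈ Ω | Ej x = 0} = RefSet Ω sj)
    (hspan : Submodule.span ℝ (RefSet Ω si) = Submodule.span ℝ (RefSet Ω sj)) :
    si = sj := by
  obtain ⟨hDsub, hidem, _⟩ := hD
  obtain ⟨hsiD, _⟩ := hsi
  obtain ⟨hsjD, hsjext⟩ := hsj
  -- D fixes si and sj
  have hfix : ∀ s ∈ D '' Ω, D s = s := by
    rintro _ ⟨x, hx, rfl⟩; exact hidem x hx
  have hsiΩ : si ∈ Ω := hDsub hsiD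
  -- si refines itself, so si ∈ RefSet Ω si
  have hself : si ∈ RefSet Ω si :=
    ⟨hsiΩ, 1, one_pos, le_refl 1, si, hsiΩ, by simp⟩
  -- si is in the span of RefSet Ω sj, hence in ker Ej
  have hker : RefSet Ω sj ⊆ (LinearMap.ker Ej : Set V) := by
    intro x hx
    rw [← hEj] at hx
    exact hx.2
  have hEjsi : Ej si = 0 := by
    have : si ∈ Submodule.span ℝ (RefSet Ω sj) := by
      rw [← hspan]; exact Submodule.subset_span hself
    have := Submodule.span_le.2 hker this
    exact this
  -- hence si ∈ RefSet Ω sj, i.e. si refines sj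
  have href : Refines Ω si sj := by
    have : si ∈ RefSet Ω sj := by rw [← hEj]; exact ⟨hsiΩ, hEjsi⟩
    exact this.2
  obtain ⟨p, hp0, hp1, t, htΩ, hsjeq⟩ := href
  rcases eq_or_lt_of_le hp1 with hp1' | hp1'
  · subst hp1'; simpa using hsjeq.symm
  · have hDt : D t ∈ D '' Ω := Set.mem_image_of_mem D htΩ
    have hsjdec : sj = p • si + (1 - p) • D t := by
      calc sj = D sj := (hfix sj hsjD).symm
        _ = p • D si + (1 - p) • D t := by rw [hsjeq]; simp [map_add, map_smul]
        _ = p • si + (1 - p) • D t := by rw [hfix si hsiD]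
    have hmem : sj ∈ openSegment ℝ si (D t) :=
      ⟨p, 1 - p, hp0, by linarith, by ring, hsjdec.symm⟩
    exact hsjext hsiD hDt hmem
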